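/- arXiv:2604.09035 — 2 statements merged into one kernel-verified Lean document; each statement's English description precedes it below -/
import Mathlib

section
/- Let σ(x) = 1/(1 + exp(−x)) denote the sigmoid function. Let A be a nonempty finite set, let π : A → ℝ satisfy π(a) ≥ 0 for all a and Σ_{a∈A} π(a) = 1, and let g : A → ℝ satisfy Σ_{a∈A} π(a)·g(a) = 0. Define Z = Σ_{a∈A} π(a)·σ(g(a)) and π^σ(a) = π(a)·σ(g(a))/Z. Then Z > 0, π^σ(a) ≥ 0 for all a, Σ_{a∈A} π^σ(a) = 1, and Σ_{a∈A} π^σ(a)·g(a) ≥ 0. -/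
open Finset

/-- The sigmoid function `σ(x) = 1 / (1 + exp (−x))`. -/
noncomputable def sigmoid (x : ℝ) : ℝ := 1 / (1 + Real.exp (-x))

lemma sigmoid_pos (x : ℝ) : 0 < sigmoid x := by
  unfold sigmoid
  positivity

lemma sigmoid_key (x : ℝ) : 0 ≤ (sigmoid x - 1/2) * x := by
  unfold sigmoid
  have h1 : 0 < 1 + Real.exp (-x) := by positivity
  rcases le_or_gt 0 x with hx | hx
  · have : Real.exp (-x) ≤ 1 := Real.exp_le_one_iff.mpr (by linarith)
    have : 1/2 ≤ 1 / (1 + Real.exp (-x)) := by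
      rw [div_le_div_iff₀ (by norm_num) h1]; linarith
    nlinarith
  · have : 1 ≤ Real.exp (-x) := Real.one_le_exp_iff.mpr (by linarith)
    have : 1 / (1 + Real.exp (-x)) ≤ 1/2 := by
      rw [div_le_div_iff₀ h1 (by norm_num)]; linarith
    nlinarith

/-- Sigmoid tilting of a finite probability distribution: if `π` is a
probability distribution on a nonempty finite set `A` and `g : A → ℝ` has
`π`-mean zero, then `Z = Σ_a π(a)·σ(g(a)) > 0`, the tilted distribution
`π^σ(a) = π(a)·σ(g(a))/Z` is a probability distribution, and the `π^σ`-mean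
of `g` is nonnegative. -/
theorem sigmoid_tilted_policy
    {A : Type*} [Fintype A] [Nonempty A]
    (π : A → ℝ) (hπ : ∀ a, 0 ≤ π a) (hπsum : ∑ a, π a = 1)
    (g : A → ℝ) (hg : ∑ a, π a * g a = 0) :
    0 < (∑ a, π a * sigmoid (g a)) ∧
      (∀ a, 0 ≤ π a * sigmoid (g a) / (∑ b, π b * sigmoid (g b))) ∧
      (∑ a, π a * sigmoid (g a) / (∑ b, π b * sigmoid (g b))) = 1 ∧
      0 ≤ ∑ a, (π a * sigmoid (g a) / (∑ b, π b * sigmoid (g b))) * g a := by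
  have hterm : ∀ a : A, 0 ≤ π a * sigmoid (g a) :=
    fun a => mul_nonneg (hπ a) (sigmoid_pos (g a)).le
  -- some a has π a > 0
  obtain ⟨a₀, ha₀⟩ : ∃ a : A, 0 < π a := by
    by_contra h
    push_neg at h
    have : ∑ a, π a = 0 :=
      Finset.sum_eq_zero fun a _ => le_antisymm (h a) (hπ a)
    rw [hπsum] at this; norm_num at this
  have hZ : 0 < ∑ a, π a * sigmoid (g a) := by
    apply Finset.sum_pos' (fun a _ => hterm a)
    exact ⟨a₀, Finset.mem_univ a₀, mul_pos ha₀ (sigmoid_pos (g a₀))⟩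
  refine ⟨hZ, fun a => div_nonneg (hterm a) hZ.le, ?_, ?_⟩
  · rw [← Finset.sum_div, div_self hZ.ne']
  · have hnum : 0 ≤ ∑ a, π a * sigmoid (g a) * g a := by
      have : ∑ a, π a * sigmoid (g a) * g a
          = ∑ a, π a * ((sigmoid (g a) - 1/2) * g a) + (1/2) * ∑ a, π a * g a := by
        rw [Finset.mul_sum, ← Finset.sum_add_distrib]
        apply Finset.sum_congr rfl
        intro a _; ring
      rw [this, hg, mul_zero, add_zero]
      exact Finset.sum_nonneg fun a _ => mul_nonneg (hπ a) (sigmoid_key (g a))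
    calc (0:ℝ) ≤ (∑ a, π a * sigmoid (g a) * g a) / (∑ b, π b * sigmoid (g b)) :=
          div_nonneg hnum hZ.le
      _ = _ := by rw [Finset.sum_div]; apply Finset.sum_congr rfl; intro a _; ring
end

section
/- Consider a finite Markov decision process: a nonempty finite state space S, a nonempty finite action space A, a transition function P : S × A × S → ℝ with P(s,a,s') ≥ 0 and Σ_{s'∈S} P(s,a,s') = 1 for all (s,a), a reward function r : S × A → ℝ, and a discount factor γ ∈ [0,1). Let π be a policy (π(s,a) ≥ 0, Σ_a π(s,a) = 1 for all s) and let V_π : S → ℝ satisfy the Bellman equation V_π(s) = Σ_a π(s,a)·( r(s,a) + γ·Σ_{s'} P(s,a,s')·V_π(s') ). Define Q_π(s,a) = r(s,a) + γ·Σ_{s'} P(s,a,s')·V_π(s'), A_π(s,a) = Q_π(s,a) − V_π(s), Z(s) = Σ_a π(s,a)·exp(A_π(s,a)), and π^exp(s,a) = π(s,a)·exp(A_π(s,a))/Z(s). Then π^exp is a policy, and if V' : S → ℝ satisfies the Bellman equation for π^exp, then V'(s) ≥ V_π(s) for all s ∈ S; consequently, for any initial distribution ρ : S → ℝ with ρ(s)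 ≥ 0 and Σ_s ρ(s) = 1, the policy values satisfy J(π^exp) = Σ_s ρ(s)·V'(s) ≥ Σ_s ρ(s)·V_π(s) = J(π). -/
open Finset

/-- EAG policy improvement (Proposition 2): in a finite MDP, the exponentially
tilted policy `π^exp(s,a) = π(s,a)·exp(A_π(s,a))/Z(s)` (with
`Z(s) = Σ_a π(s,a)·exp(A_π(s,a))` and advantage `A_π(s,a) = Q_π(s,a) − V_π(s)`)
is a policy, any solution `V'` of its Bellman equation dominates `V_π`
pointwise, and hence `J(π^exp) = Σ_s ρ(s)·V'(s) ≥ Σ_s ρ(s)·V_π(s) = J(π)` for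
any initial distribution `ρ`. -/
theorem eag_policy_improvement
    {S A : Type*} [Fintype S] [Fintype A] [Nonempty S] [Nonempty A]
    (P : S → A → S → ℝ) (hP : ∀ s a s', 0 ≤ P s a s')
    (hPsum : ∀ s a, ∑ s', P s a s' = 1)
    (r : S → A → ℝ) (γ : ℝ) (hγ0 : 0 ≤ γ) (hγ1 : γ < 1)
    (π : S → A → ℝ) (hπ : ∀ s a, 0 ≤ π s a) (hπsum : ∀ s, ∑ a, π s a = 1)
    (Vπ : S → ℝ)
    (hV : ∀ s, Vπ s = ∑ a, π s a * (r s a + γ * ∑ s', P s a s' * Vπ s'))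
    (Aπ : S → A → ℝ)
    (hA : ∀ s a, Aπ s a = (r s a + γ * ∑ s', P s a s' * Vπ s') - Vπ s)
    (Z : S → ℝ) (hZ : ∀ s, Z s = ∑ a, π s a * Real.exp (Aπ s a))
    (πexp : S → A → ℝ) (hπexp : ∀ s a, πexp s a = π s a * Real.exp (Aπ s a) / Z s) :
    (∀ s a, 0 ≤ πexp s a) ∧ (∀ s, ∑ a, πexp s a = 1) ∧
      ∀ V' : S → ℝ,
        (∀ s, V' s = ∑ a, πexp s a * (r s a + γ * ∑ s', P s a s' * V' s')) →
          (∀ s, Vπ s ≤ V' s) ∧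
            ∀ ρ : S → ℝ, (∀ s, 0 ≤ ρ s) → (∑ s, ρ s = 1) →
              ∑ s, ρ s * Vπ s ≤ ∑ s, ρ s * V' s := by
  have hZpos : ∀ s, 0 < Z s := by
    intro s
    obtain ⟨a, ha⟩ : ∃ a, 0 < π s a := by
      by_contra h
      push_neg at h
      have h0 : ∑ a, π s a = 0 :=
        Finset.sum_eq_zero fun a _ => le_antisymm (h a) (hπ s a)
      rw [hπsum s] at h0; norm_num at h0
    rw [hZ]
    calc (0:ℝ) < π s a * Real.exp (Aπ s a) := mul_pos ha (Real.exp_pos _)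
      _ ≤ ∑ a, π s a * Real.exp (Aπ s a) :=
        Finset.single_le_sum (fun b _ => mul_nonneg (hπ s b) (Real.exp_pos _).le)
          (Finset.mem_univ a)
  have hπexp_nn : ∀ s a, 0 ≤ πexp s a := fun s a => by
    rw [hπexp]
    exact div_nonneg (mul_nonneg (hπ s a) (Real.exp_pos _).le) (hZpos s).le
  have hπexp_sum : ∀ s, ∑ a, πexp s a = 1 := fun s => by
    simp only [hπexp]
    rw [← Finset.sum_div, ← hZ, div_self (hZpos s).ne']
  refine ⟨hπexp_nn, hπexp_sum, fun V' hV' => ?_⟩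
  have hadv : ∀ s, 0 ≤ ∑ a, πexp s a * Aπ s a := by
    intro s
    have h0 : ∑ a, π s a * Aπ s a = 0 := by
      simp only [hA, mul_sub]
      rw [Finset.sum_sub_distrib, ← Finset.sum_mul, hπsum s, one_mul, ← hV s, sub_self]
    have hrw : ∑ a, πexp s a * Aπ s a
        = (∑ a, π s a * (Real.exp (Aπ s a) * Aπ s a)) / Z s := by
      rw [Finset.sum_div]
      refine Finset.sum_congr rfl fun a _ => ?_
      rw [hπexp]; ring
    rw [hrw]
    apply div_nonneg _ (hZpos s).le
    calc (0:ℝ) = ∑ a, π s a * Aπ s a := h0.symm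
      _ ≤ ∑ a, π s a * (Real.exp (Aπ s a) * Aπ s a) := by
        refine Finset.sum_le_sum fun a _ => ?_
        refine mul_le_mul_of_nonneg_left ?_ (hπ s a)
        rcases le_or_gt 0 (Aπ s a) with h | h
        · nlinarith [Real.one_le_exp h]
        · nlinarith [Real.exp_lt_one_iff.mpr h, (Real.exp_pos (Aπ s a)).le]
  have hstep : ∀ s, Vπ s ≤ ∑ a, πexp s a * (r s a + γ * ∑ s', P s a s' * Vπ s') := by
    intro s
    have hexpand : ∀ a, πexp s a * (r s a + γ * ∑ s', P s a s' * Vπ s')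
        = πexp s a * Aπ s a + πexp s a * Vπ s := by
      intro a; rw [hA]; ring
    rw [Finset.sum_congr rfl fun a _ => hexpand a, Finset.sum_add_distrib,
      ← Finset.sum_mul, hπexp_sum s, one_mul]
    linarith [hadv s]
  obtain ⟨s0, _, hs0⟩ := Finset.exists_min_image Finset.univ (fun s => V' s - Vπ s)
    ⟨Classical.arbitrary S, Finset.mem_univ _⟩
  have hmin : ∀ s, V' s0 - Vπ s0 ≤ V' s - Vπ s := fun s => hs0 s (Finset.mem_univ s)
  have hdiff : ∑ a, πexp s0 a * (r s0 a + γ * ∑ s', P s0 a s' * V' s')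
      - ∑ a, πexp s0 a * (r s0 a + γ * ∑ s', P s0 a s' * Vπ s')
      = ∑ a, πexp s0 a * (γ * ∑ s', P s0 a s' * (V' s' - Vπ s')) := by
    rw [← Finset.sum_sub_distrib]
    refine Finset.sum_congr rfl fun a _ => ?_
    have hinner : ∑ s', P s0 a s' * (V' s' - Vπ s')
        = (∑ s', P s0 a s' * V' s') - ∑ s', P s0 a s' * Vπ s' := by
      rw [← Finset.sum_sub_distrib]
      exact Finset.sum_congr rfl fun _ _ => by ring
    rw [hinner]; ring
  have h3 : γ * (V' s0 - Vπ s0)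
      ≤ ∑ a, πexp s0 a * (γ * ∑ s', P s0 a s' * (V' s' - Vπ s')) := by
    calc γ * (V' s0 - Vπ s0)
        = ∑ a, πexp s0 a * (γ * (V' s0 - Vπ s0)) := by
          rw [← Finset.sum_mul, hπexp_sum s0, one_mul]
      _ ≤ _ := by
          refine Finset.sum_le_sum fun a _ => ?_
          refine mul_le_mul_of_nonneg_left ?_ (hπexp_nn s0 a)
          refine mul_le_mul_of_nonneg_left ?_ hγ0
          calc V' s0 - Vπ s0 = ∑ s', P s0 a s' * (V' s0 - Vπ s0) := by
                rw [← Finset.sum_mul, hPsum, one_mul]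
            _ ≤ ∑ s', P s0 a s' * (V' s' - Vπ s') :=
                Finset.sum_le_sum fun s' _ =>
                  mul_le_mul_of_nonneg_left (hmin s') (hP _ _ _)
  have hkey : γ * (V' s0 - Vπ s0) ≤ V' s0 - Vπ s0 := by
    have h1 := hstep s0
    have h2 := hV' s0
    linarith [hdiff, h3]
  have hpos0 : 0 ≤ V' s0 - Vπ s0 := by nlinarith
  have hdom : ∀ s, Vπ s ≤ V' s := fun s => by linarith [hmin s]
  exact ⟨hdom, fun ρ hρ _ =>
    Finset.sum_le_sum fun s _ => mul_le_mul_of_nonneg_left (hdom s) (hρ s)⟩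
end
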